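/- An ω-translation realised by an interactive i/o transition system whose transition relation is computable is limit-continuous: there exists a computable monotonic total function g : Σ* → Σ* such that for every strictly increasing chain u₁ ≺ u₂ ≺ ⋯ of finite words, φ(lim uₜ) = lim g(uₜ). -/

import Mathlib

/-- Visible labels: input actions `?b` and output actions `!b`; τ is `none`. -/
inductive IOLabel where
  | inp : Bool → IOLabel
  | out : Bool → IOLabel
deriving DecidableEq

/-- Encode `IOLabel` as `Bool × Bool` to obtain a `Primcodable` instance. -/
def IOLabel.equivBoolProd : IOLabel ≃ Bool × Bool where
  toFun a := match a with | .inp b => (false, b) | .out b => (true, b)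
  invFun p := if p.1 then .out p.2 else .inp p.2
  left_inv := by rintro (b | b) <;> simp
  right_inv := by rintro ⟨(_ | _), b⟩ <;> simp

instance : Primcodable IOLabel := Primcodable.ofEquiv _ IOLabel.equivBoolProd

/-- An i/o transition system with an effective (countable) state space `ℕ`. -/
structure IOTS where
  tr : ℕ → Option IOLabel → ℕ → Prop
  init : ℕ
  I : ℕ → Prop
  init_mem : I init
  alt_I : ∀ s a t, I s → tr s a t → (∃ b, a = some (IOLabel.inp b)) ∧ ¬ I t
  alt_E : ∀ s a t, ¬ I s → tr s a t → (a = none ∨ ∃ b, a = some (IOLabel.out b)) ∧ I t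
  unamb : ∀ s, ¬ I s → ∃! p : Option IOLabel × ℕ, tr s p.1 p.2
  total : ∀ s, I s → ∀ b : Bool, ∃! t, tr s (some (IOLabel.inp b)) t

namespace IOTS

def InfPath (T : IOTS) (p : ℕ → ℕ) (l : ℕ → Option IOLabel) : Prop :=
  ∀ n, T.tr (p n) (l n) (p (n + 1))

def SpellsInput (l : ℕ → Option IOLabel) (x : ℕ → Bool) : Prop :=
  ∃ φ : ℕ → ℕ, StrictMono φ ∧ (∀ n, l (φ n) = some (IOLabel.inp (x n))) ∧
    ∀ m b, l m = some (IOLabel.inp b) → ∃ n, φ n = m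

def SpellsOutput (l : ℕ → Option IOLabel) (y : ℕ → Bool) : Prop :=
  ∃ φ : ℕ → ℕ, StrictMono φ ∧ (∀ n, l (φ n) = some (IOLabel.out (y n))) ∧
    ∀ m b, l m = some (IOLabel.out b) → ∃ n, φ n = m

def Interactive (T : IOTS) : Prop :=
  ∀ s (b : Bool) s₀, T.tr s (some (IOLabel.inp b)) s₀ →
    ∀ (p : ℕ → ℕ) (l : ℕ → Option IOLabel), p 0 = s₀ →
      (∀ n, T.tr (p n) (l n) (p (n + 1))) → ∃ j b', l j = some (IOLabel.out b')

def Realises (T : IOTS) (φ : (ℕ → Bool) → (ℕ → Bool)) : Prop :=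
  ∀ x : ℕ → Bool,
    (∃ p l, p 0 = T.init ∧ InfPath T p l ∧ SpellsInput l x) ∧
    (∀ p l, p 0 = T.init → InfPath T p l → SpellsInput l x → SpellsOutput l (φ x))

end IOTS

def SPrefix (u v : List Bool) : Prop := u <+: v ∧ u ≠ v

def StreamPrefix (u : List Bool) (x : ℕ → Bool) : Prop :=
  ∀ i (h : i < u.length), u[i] = x i

namespace IOTSProof

open IOTS

variable (T : IOTS)

open Classical

/-- Bit output by a label, if any. -/
def outBit : Option IOLabel → Option Bool
  | some (IOLabel.out c) => some c
  | _ => none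

/-- The unique successor of an input-accepting state on input `b`. -/
noncomputable def aNext (s : ℕ) (b : Bool) : ℕ :=
  if h : ∃! t, T.tr s (some (IOLabel.inp b)) t then h.choose else 0

/-- The unique outgoing transition of a non-input state. -/
noncomputable def eNext (s : ℕ) : Option IOLabel × ℕ :=
  if h : ∃! p : Option IOLabel × ℕ, T.tr s p.1 p.2 then h.choose else (none, 0)

theorem aNext_spec {s : ℕ} (hs : T.I s) (b : Bool) :
    T.tr s (some (IOLabel.inp b)) (aNext T s b) ∧
      ∀ t, T.tr s (some (IOLabel.inp b)) t → t = aNext T s b := by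
  have h := T.total s hs b
  rw [aNext, dif_pos h]
  exact ⟨h.choose_spec.1, h.choose_spec.2⟩

theorem eNext_spec {s : ℕ} (hs : ¬ T.I s) :
    T.tr s (eNext T s).1 (eNext T s).2 ∧
      ∀ p : Option IOLabel × ℕ, T.tr s p.1 p.2 → p = eNext T s := by
  have h := T.unamb s hs
  rw [eNext, dif_pos h]
  exact ⟨h.choose_spec.1, h.choose_spec.2⟩

/-- One macro-step: consume one input bit, perform the input transition and the
subsequent internal/output transition, appending the output bit (if any). -/
noncomputable def step0 (p : ℕ × List Bool) (b : Bool) : ℕ × List Bool :=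
  ((eNext T (aNext T p.1 b)).2, p.2 ++ (outBit (eNext T (aNext T p.1 b)).1).toList)

/-- The run of the system on a finite input word. -/
noncomputable def run (u : List Bool) : ℕ × List Bool :=
  u.foldl (step0 T) (T.init, [])

theorem run_append (u v : List Bool) : run T (u ++ v) = v.foldl (step0 T) (run T u) :=
  List.foldl_append ..

theorem foldl_snd_prefix (v : List Bool) :
    ∀ p : ℕ × List Bool, p.2 <+: (v.foldl (step0 T) p).2 := by
  induction v with
  | nil => intro p; exact List.prefix_refl _
  | cons b v ih =>
    intro p
    refine List.IsPrefix.trans ?_ (ih (step0 T p b))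
    exact ⟨(outBit (eNext T (aNext T p.1 b)).1).toList, rfl⟩

theorem run_snd_mono {u v : List Bool} (h : u <+: v) : (run T u).2 <+: (run T v).2 := by
  obtain ⟨w, rfl⟩ := h
  rw [run_append]
  exact foldl_snd_prefix T w (run T u)

/-- The sequence of input-accepting states along the run on the stream `x`. -/
noncomputable def S (x : ℕ → Bool) : ℕ → ℕ
  | 0 => T.init
  | n + 1 => (eNext T (aNext T (S x n) (x n))).2

/-- The intermediate states. -/
noncomputable def E (x : ℕ → Bool) (n : ℕ) : ℕ := aNext T (S T x n) (x n)

/-- The label of the internal/output transition at stage `n`. -/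
noncomputable def A (x : ℕ → Bool) (n : ℕ) : Option IOLabel := (eNext T (E T x n)).1

/-- Output bit (if any) at stage `n`. -/
noncomputable def O (x : ℕ → Bool) (n : ℕ) : Option Bool := outBit (A T x n)

theorem S_I (x : ℕ → Bool) : ∀ n, T.I (S T x n) := by
  intro n
  induction n with
  | zero => exact T.init_mem
  | succ n ih =>
    have h1 := (aNext_spec T ih (x n)).1
    have h2 : ¬ T.I (aNext T (S T x n) (x n)) := (T.alt_I _ _ _ ih h1).2
    have h3 := (eNext_spec T h2).1
    exact (T.alt_E _ _ _ h2 h3).2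

theorem E_not_I (x : ℕ → Bool) (n : ℕ) : ¬ T.I (E T x n) :=
  (T.alt_I _ _ _ (S_I T x n) (aNext_spec T (S_I T x n) (x n)).1).2

theorem tr_SE (x : ℕ → Bool) (n : ℕ) : T.tr (S T x n) (some (IOLabel.inp (x n))) (E T x n) :=
  (aNext_spec T (S_I T x n) (x n)).1

theorem tr_ES (x : ℕ → Bool) (n : ℕ) : T.tr (E T x n) (A T x n) (S T x (n + 1)) :=
  (eNext_spec T (E_not_I T x n)).1

theorem A_not_inp (x : ℕ → Bool) (n : ℕ) (b : Bool) : A T x n ≠ some (IOLabel.inp b) := by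
  intro h
  rcases (T.alt_E _ _ _ (E_not_I T x n) (tr_ES T x n)).1 with h' | ⟨c, h'⟩ <;> simp [h] at h'

/-- Relating the finite run to the infinite run. -/
theorem run_range (x : ℕ → Bool) :
    ∀ n, run T ((List.range n).map x) = (S T x n, (List.range n).filterMap (O T x)) := by
  intro n
  induction n with
  | zero => simp [run, S]
  | succ n ih =>
    rw [List.range_succ, List.map_append, run_append, List.filterMap_append, ih]
    simp only [List.map_cons, List.map_nil, List.foldl_cons, List.foldl_nil,
      List.filterMap_cons, List.filterMap_nil, step0, S, E, A, O]
    cases outBit (eNext T (aNext T (S T x n) (x n))).1 <;> rfl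

theorem run_of_streamPrefix {u : List Bool} {x : ℕ → Bool} (h : StreamPrefix u x) :
    run T u = (S T x u.length, (List.range u.length).filterMap (O T x)) := by
  rw [← run_range T x u.length]
  congr 1
  apply List.ext_getElem
  · simp
  · intro i h1 h2
    simp only [List.getElem_map, List.getElem_range]
    exact h i h1

end IOTSProof

namespace IOTSProof

variable (T : IOTS)

/-- The interleaved infinite path of states for input stream `x`. -/
noncomputable def pth (x : ℕ → Bool) (m : ℕ) : ℕ :=
  if m % 2 = 0 then S T x (m / 2) else E T x (m / 2)

/-- The labels of the interleaved infinite path. -/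
noncomputable def lab (x : ℕ → Bool) (m : ℕ) : Option IOLabel :=
  if m % 2 = 0 then some (IOLabel.inp (x (m / 2))) else A T x (m / 2)

theorem pth_zero (x : ℕ → Bool) : pth T x 0 = T.init := by
  simp [pth, S]

theorem infPath (x : ℕ → Bool) : IOTS.InfPath T (pth T x) (lab T x) := by
  intro m
  rcases Nat.even_or_odd m with ⟨k, hk⟩ | ⟨k, hk⟩
  · have h1 : m % 2 = 0 := by omega
    have h2 : m / 2 = k := by omega
    have h3 : ¬ (m + 1) % 2 = 0 := by omega
    have h4 : (m + 1) / 2 = k := by omega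
    simp only [pth, lab]
    rw [if_pos h1, if_pos h1, if_neg h3, h2, h4]
    exact tr_SE T x k
  · have h1 : ¬ m % 2 = 0 := by omega
    have h2 : m / 2 = k := by omega
    have h3 : (m + 1) % 2 = 0 := by omega
    have h4 : (m + 1) / 2 = k + 1 := by omega
    simp only [pth, lab]
    rw [if_neg h1, if_neg h1, if_pos h3, h2, h4]
    exact tr_ES T x k

theorem spellsInput (x : ℕ → Bool) : IOTS.SpellsInput (lab T x) x := by
  refine ⟨fun n => 2 * n, fun a b h => (by omega : 2 * a < 2 * b), fun n => ?_, fun m b hm => ?_⟩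
  · simp only [lab]
    rw [if_pos (by omega : 2 * n % 2 = 0), (by omega : 2 * n / 2 = n)]
  · by_cases h : m % 2 = 0
    · exact ⟨m / 2, (by omega : 2 * (m / 2) = m)⟩
    · exfalso
      simp only [lab] at hm
      rw [if_neg h] at hm
      exact A_not_inp T x (m / 2) b hm

theorem exists_rho (x : ℕ → Bool) (y : ℕ → Bool) (hsp : IOTS.SpellsOutput (lab T x) y) :
    ∃ ρ : ℕ → ℕ, StrictMono ρ ∧ (∀ i, O T x (ρ i) = some (y i)) ∧
      ∀ n c, O T x n = some c → ∃ i, ρ i = n := by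
  obtain ⟨ψ, hmono, hval, hsurj⟩ := hsp
  have hodd : ∀ i, ψ i % 2 = 1 := by
    intro i
    by_contra h
    have h0 : ψ i % 2 = 0 := by omega
    have hv := hval i
    simp only [lab] at hv
    rw [if_pos h0] at hv
    simp at hv
  refine ⟨fun i => ψ i / 2, ?_, ?_, ?_⟩
  · intro a b h
    have := hmono h
    have ha := hodd a
    have hb := hodd b
    show ψ a / 2 < ψ b / 2
    omega
  · intro i
    have h := hval i
    simp only [lab] at h
    rw [if_neg (by have := hodd i; omega : ¬ ψ i % 2 = 0)] at h
    simp only [O, h, outBit]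
  · intro n c hc
    have hA : A T x n = some (IOLabel.out c) := by
      simp only [O, outBit] at hc
      rcases hA' : A T x n with _ | (b | b) <;> rw [hA'] at hc <;> simp_all [outBit]
    have hl : lab T x (2 * n + 1) = some (IOLabel.out c) := by
      simp only [lab]
      rw [if_neg (by omega : ¬ (2 * n + 1) % 2 = 0), (by omega : (2 * n + 1) / 2 = n)]
      exact hA
    obtain ⟨i, hi⟩ := hsurj _ _ hl
    exact ⟨i, (by omega : ψ i / 2 = n)⟩

theorem filterMap_range_succ (Ω : ℕ → Option Bool) (N : ℕ) :
    (List.range (N + 1)).filterMap Ω = (List.range N).filterMap Ω ++ (Ω N).toList := by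
  cases hN : Ω N <;> simp [List.range_succ, hN]

theorem filterMap_eq_map {Ω : ℕ → Option Bool} {y : ℕ → Bool} {ρ : ℕ → ℕ}
    (hρ : StrictMono ρ) (hval : ∀ i, Ω (ρ i) = some (y i))
    (hsurj : ∀ n c, Ω n = some c → ∃ i, ρ i = n) (N : ℕ) :
    (List.range N).filterMap Ω =
      (List.range ((List.range N).filterMap Ω).length).map y ∧
      ∀ i, ρ i < N ↔ i < ((List.range N).filterMap Ω).length := by
  induction N with
  | zero => simp
  | succ N ih =>
    obtain ⟨ih1, ih2⟩ := ih
    rw [filterMap_range_succ]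
    cases hΩ : Ω N with
    | none =>
      simp only [Option.toList_none, List.append_nil]
      refine ⟨ih1, fun i => ?_⟩
      have hne : ρ i ≠ N := by
        intro h
        have hv := hval i
        rw [h, hΩ] at hv
        exact Option.some_ne_none _ hv.symm
      constructor
      · intro h
        exact (ih2 i).1 (by omega)
      · intro h
        have := (ih2 i).2 h
        omega
    | some c =>
      obtain ⟨i0, hi0⟩ := hsurj N c hΩ
      have hiL : i0 = ((List.range N).filterMap Ω).length := by
        have h1 : ¬ i0 < ((List.range N).filterMap Ω).length := by
          intro h
          have := (ih2 i0).2 h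
          omega
        have h2 : ¬ ((List.range N).filterMap Ω).length < i0 := by
          intro h
          have h3 := hρ h
          rw [hi0] at h3
          have := (ih2 _).1 h3
          omega
        omega
      have hc : c = y i0 := by
        have := hval i0
        rw [hi0, hΩ] at this
        exact Option.some.inj this
      constructor
      · rw [ih1]
        simp only [Option.toList_some, List.length_append, List.length_map,
          List.length_range, List.length_cons, List.length_nil]
        rw [List.range_succ, List.map_append]
        simp only [List.map_cons, List.map_nil]
        rw [hc, hiL]
      · intro i
        simp only [Option.toList_some, List.length_append, List.length_cons, List.length_nil]
        constructor
        · intro h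
          rcases Nat.lt_or_ge (ρ i) N with h' | h'
          · have := (ih2 i).1 h'
            omega
          · have hρiN : ρ i = N := by omega
            have : i = i0 := hρ.injective (by rw [hρiN, hi0])
            omega
        · intro h
          rcases Nat.lt_or_ge i ((List.range N).filterMap Ω).length with h' | h'
          · have := (ih2 i).2 h'
            omega
          · have : i = i0 := by omega
            subst this
            omega

end IOTSProof

namespace IOTSProof

/-! ### Computability -/

/-- Search predicate for the input transition. -/
def pred1 (f : ℕ × Option IOLabel × ℕ → Bool) (q : ℕ × Bool) (t : ℕ) : Bool :=
  f (q.1, some (IOLabel.inp q.2), t)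

/-- Partial computation of the input successor. -/
def pstep1 (f : ℕ × Option IOLabel × ℕ → Bool) (q : ℕ × Bool) : Part ℕ :=
  Nat.rfind ↑(pred1 f q)

/-- Search predicate for the unique internal/output transition. -/
def pred2 (f : ℕ × Option IOLabel × ℕ → Bool) (s : ℕ) (n : ℕ) : Bool :=
  ((Encodable.decode (α := Option IOLabel × ℕ) n).map fun p => f (s, p.1, p.2)).getD false

/-- Partial computation of the unique internal/output transition. -/
def pstep2 (f : ℕ × Option IOLabel × ℕ → Bool) (s : ℕ) : Part (Option IOLabel × ℕ) :=
  (Nat.rfind ↑(pred2 f s)).map fun n =>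
    (Encodable.decode (α := Option IOLabel × ℕ) n).getD (none, 0)

/-- The output bit of a label, as a list. -/
def obl (a : Option IOLabel) : List Bool := (outBit a).toList

/-- One partial macro-step. -/
def pstep (f : ℕ × Option IOLabel × ℕ → Bool) (q : ℕ × List Bool × Bool) :
    Part (ℕ × List Bool) :=
  (pstep1 f (q.1, q.2.2)).bind fun t =>
    (pstep2 f t).map fun pr => (pr.2, q.2.1 ++ obl pr.1)

/-- The partial run, by recursion on the number of consumed bits. -/
def prunNat (f : ℕ × Option IOLabel × ℕ → Bool) (i0 : ℕ) (u : List Bool) : ℕ →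
    Part (ℕ × List Bool) :=
  fun k => Nat.rec (Part.some (i0, []))
    (fun y IH => IH.bind fun i => pstep f (i.1, i.2, u.getD y true)) k

def prun (f : ℕ × Option IOLabel × ℕ → Bool) (i0 : ℕ) (u : List Bool) :
    Part (ℕ × List Bool) :=
  prunNat f i0 u u.length

theorem primrec_inp : Primrec IOLabel.inp := by
  have h : Primrec fun b : Bool => IOLabel.equivBoolProd.symm (false, b) :=
    Primrec.of_equiv_symm.comp ((Primrec.const false).pair Primrec.id)
  exact h.of_eq fun b => by simp [IOLabel.equivBoolProd]

theorem primrec_obl : Primrec obl := by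
  have h : Primrec fun a : Option IOLabel =>
      Option.casesOn (motive := fun _ => List Bool) a [] fun i =>
        cond (IOLabel.equivBoolProd i).1 [(IOLabel.equivBoolProd i).2] [] := by
    refine Primrec.option_casesOn Primrec.id (Primrec.const []) ?_
    refine Primrec₂.mk <| Primrec.cond
      (Primrec.fst.comp (Primrec.of_equiv.comp Primrec.snd))
      ((Primrec.list_cons.comp (Primrec.snd.comp (Primrec.of_equiv.comp Primrec.snd))
        (Primrec.const []))) (Primrec.const [])
  refine h.of_eq fun a => ?_
  rcases a with _ | (b | b) <;> simp [obl, outBit, IOLabel.equivBoolProd]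

section Comp

variable {f : ℕ × Option IOLabel × ℕ → Bool}

theorem computable_pred1 (hf : Computable f) : Computable₂ (pred1 f) := by
  refine hf.comp ?_
  exact Computable.pair (Computable.fst.comp Computable.fst)
    (Computable.pair
      ((Primrec.option_some.comp primrec_inp).to_comp.comp (Computable.snd.comp Computable.fst))
      Computable.snd)

theorem partrec_pstep1 (hf : Computable f) : Partrec (pstep1 f) :=
  Partrec.rfind (computable_pred1 hf).partrec₂

theorem computable_pred2 (hf : Computable f) : Computable₂ (pred2 f) := by
  have hdec : Computable fun p : ℕ × ℕ =>
      (Encodable.decode (α := Option IOLabel × ℕ) p.2) :=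
    Computable.decode.comp Computable.snd
  have hmap : Computable fun p : ℕ × ℕ =>
      ((Encodable.decode (α := Option IOLabel × ℕ) p.2).map fun q => f (p.1, q.1, q.2)) :=
    Computable.option_map hdec
      (hf.comp (Computable.pair (Computable.fst.comp Computable.fst)
        (Computable.pair (Computable.fst.comp Computable.snd)
          (Computable.snd.comp Computable.snd)))).to₂
  exact Primrec.option_getD.to_comp.comp hmap (Computable.const false)

theorem partrec_pstep2 (hf : Computable f) : Partrec (pstep2 f) := by
  refine Partrec.map (Partrec.rfind (computable_pred2 hf).partrec₂) ?_
  exact (Primrec.option_getD.to_comp.comp (Computable.decode.comp Computable.snd)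
    (Computable.const (none, 0))).to₂

theorem partrec_pstep (hf : Computable f) : Partrec (pstep f) := by
  have h1 : Partrec fun q : ℕ × List Bool × Bool => pstep1 f (q.1, q.2.2) :=
    (partrec_pstep1 hf).comp
      (Computable.pair Computable.fst (Computable.snd.comp Computable.snd))
  have hg : Computable fun p : ((ℕ × List Bool × Bool) × ℕ) × Option IOLabel × ℕ =>
      ((p.2.2, p.1.1.2.1 ++ obl p.2.1) : ℕ × List Bool) :=
    Computable.pair (Computable.snd.comp Computable.snd)
      (Computable.list_append.comp
        (Computable.fst.comp (Computable.snd.comp (Computable.fst.comp Computable.fst)))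
        (primrec_obl.to_comp.comp (Computable.fst.comp Computable.snd)))
  have h2 : Partrec₂ fun (q : ℕ × List Bool × Bool) (t : ℕ) =>
      (pstep2 f t).map fun pr => ((pr.2, q.2.1 ++ obl pr.1) : ℕ × List Bool) :=
    Partrec.map ((partrec_pstep2 hf).comp Computable.snd) hg.to₂
  exact Partrec.bind h1 h2

theorem partrec_prun (hf : Computable f) (i0 : ℕ) : Partrec (prun f i0) := by
  have h := Partrec.nat_rec (f := fun u : List Bool => u.length)
    (g := fun _ : List Bool => Part.some ((i0, []) : ℕ × List Bool))
    (h := fun (u : List Bool) (p : ℕ × (ℕ × List Bool)) =>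
      pstep f (p.2.1, p.2.2, u.getD p.1 true))
    Computable.list_length (Partrec.const' _) ?_
  · exact h.of_eq fun u => rfl
  · show Partrec fun p : List Bool × (ℕ × (ℕ × List Bool)) =>
      pstep f (p.2.2.1, p.2.2.2, p.1.getD p.2.1 true)
    exact (partrec_pstep hf).comp
      (Computable.pair (Computable.fst.comp (Computable.snd.comp Computable.snd))
        (Computable.pair (Computable.snd.comp (Computable.snd.comp Computable.snd))
          ((Primrec.list_getD true).to_comp.comp Computable.fst
            (Computable.fst.comp Computable.snd))))

end Comp

end IOTSProof

namespace IOTSProof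

section Correct

variable {T : IOTS} {f : ℕ × Option IOLabel × ℕ → Bool}

theorem mem_pstep1 (hfT : ∀ s a t, T.tr s a t ↔ f (s, a, t) = true) {s : ℕ} (hs : T.I s) (b : Bool) : aNext T s b ∈ pstep1 f (s, b) := by
  have hspec := aNext_spec T hs b
  have hm : pred1 f (s, b) (aNext T s b) = true := (hfT _ _ _).1 hspec.1
  obtain ⟨n, hn, hle⟩ := Nat.rfind_min' hm
  have htr : T.tr s (some (IOLabel.inp b)) n := by
    have := Nat.rfind_spec hn
    exact (hfT _ _ _).2 (Part.mem_some_iff.1 this).symm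
  have : n = aNext T s b := hspec.2 n htr
  rwa [this] at hn

theorem mem_pstep2 (hfT : ∀ s a t, T.tr s a t ↔ f (s, a, t) = true) {t : ℕ} (ht : ¬ T.I t) : eNext T t ∈ pstep2 f t := by
  have hspec := eNext_spec T ht
  have hm : pred2 f t (Encodable.encode (eNext T t)) = true := by
    simp only [pred2, Encodable.encodek, Option.map_some, Option.getD_some]
    exact (hfT _ _ _).1 hspec.1
  obtain ⟨n, hn, hle⟩ := Nat.rfind_min' hm
  have hp : pred2 f t n = true := (Part.mem_some_iff.1 (Nat.rfind_spec hn)).symm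
  simp only [pred2] at hp
  rcases hd : Encodable.decode (α := Option IOLabel × ℕ) n with _ | p
  · rw [hd] at hp; simp at hp
  · rw [hd] at hp
    simp only [Option.map_some, Option.getD_some] at hp
    have htr : T.tr t p.1 p.2 := (hfT _ _ _).2 hp
    have hpe : p = eNext T t := hspec.2 p htr
    refine (Part.mem_map_iff _).2 ⟨n, hn, ?_⟩
    rw [hd, Option.getD_some, hpe]

theorem mem_pstep (hfT : ∀ s a t, T.tr s a t ↔ f (s, a, t) = true) {p : ℕ × List Bool} (hp : T.I p.1) (b : Bool) :
    step0 T p b ∈ pstep f (p.1, p.2, b) := by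
  have h1 := mem_pstep1 (T := T) hfT hp b
  have hnI : ¬ T.I (aNext T p.1 b) :=
    (T.alt_I _ _ _ hp (aNext_spec T hp b).1).2
  have h2 := mem_pstep2 (T := T) hfT hnI
  refine Part.mem_bind_iff.2 ⟨aNext T p.1 b, h1, ?_⟩
  exact (Part.mem_map_iff _).2 ⟨eNext T (aNext T p.1 b), h2, rfl⟩

theorem run_fst_I : ∀ u : List Bool, T.I (run T u).1 := by
  intro u
  induction u using List.reverseRecOn with
  | nil => exact T.init_mem
  | append_singleton u b ih =>
    rw [run_append]
    simp only [List.foldl_cons, List.foldl_nil, step0]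
    have hnI : ¬ T.I (aNext T (run T u).1 b) :=
      (T.alt_I _ _ _ ih (aNext_spec T ih b).1).2
    exact (T.alt_E _ _ _ hnI (eNext_spec T hnI).1).2

theorem mem_prunNat (hfT : ∀ s a t, T.tr s a t ↔ f (s, a, t) = true) : ∀ (u : List Bool) (k : ℕ), k ≤ u.length →
    run T (u.take k) ∈ prunNat f T.init u k := by
  intro u k
  induction k with
  | zero =>
    intro _
    simp only [List.take_zero, prunNat]
    exact Part.mem_some _
  | succ k ih =>
    intro hk
    have hk' : k ≤ u.length := by omega
    have hklt : k < u.length := by omega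
    have hmem := ih hk'
    show run T (u.take (k + 1)) ∈
      (prunNat f T.init u k).bind fun i => pstep f (i.1, i.2, u.getD k true)
    refine Part.mem_bind_iff.2 ⟨run T (u.take k), hmem, ?_⟩
    have hgd : u.getD k true = u[k] := List.getD_eq_getElem u true hklt
    have htake : u.take (k + 1) = u.take k ++ [u[k]] := by
      rw [List.take_succ]
      congr 1
      rw [List.getElem?_eq_getElem hklt]
      rfl
    have hrun : run T (u.take (k + 1)) = step0 T (run T (u.take k)) u[k] := by
      rw [htake, run_append]
      rfl
    rw [hrun, hgd]
    exact mem_pstep (T := T) hfT (run_fst_I _) _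

theorem mem_prun (hfT : ∀ s a t, T.tr s a t ↔ f (s, a, t) = true) (u : List Bool) : run T u ∈ prun f T.init u := by
  have := mem_prunNat (T := T) hfT u u.length le_rfl
  rwa [List.take_length] at this

theorem computable_g (hfT : ∀ s a t, T.tr s a t ↔ f (s, a, t) = true) (hf : Computable f) : Computable fun u : List Bool => (run T u).2 := by
  have hp : Partrec fun u : List Bool => (prun f T.init u).map Prod.snd :=
    Partrec.map (partrec_prun hf T.init)
      (Computable.snd.comp Computable.snd).to₂
  refine Partrec.of_eq_tot hp fun u => ?_
  exact (Part.mem_map_iff _).2 ⟨run T u, mem_prun hfT u, rfl⟩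

end Correct

end IOTSProof


/-- An ω-translation realised by an interactive i/o transition system with a computable
transition relation is limit-continuous: there is a computable monotonic total function
`g : Σ* → Σ*` such that for every strictly increasing chain `u₁ ≺ u₂ ≺ ⋯`,
`φ (lim uₜ) = lim (g (uₜ))`. -/
theorem stmt_11 (T : IOTS) (hint : IOTS.Interactive T)
    (f : ℕ × Option IOLabel × ℕ → Bool) (hf : Computable f)
    (hfT : ∀ s a t, T.tr s a t ↔ f (s, a, t) = true)
    (φ : (ℕ → Bool) → (ℕ → Bool)) (hφ : IOTS.Realises T φ) :
    ∃ g : List Bool → List Bool, Computable g ∧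
      (∀ u v, u <+: v → g u <+: g v) ∧
      ∀ u : ℕ → List Bool, (∀ k, SPrefix (u k) (u (k + 1))) →
        ∀ x : ℕ → Bool, (∀ k, StreamPrefix (u k) x) →
          (∀ k, StreamPrefix (g (u k)) (φ x)) ∧
          (∀ n, ∃ k, n ≤ (g (u k)).length) := by
  classical
  refine ⟨fun u => (IOTSProof.run T u).2, IOTSProof.computable_g hfT hf,
    fun u v h => IOTSProof.run_snd_mono T h, ?_⟩
  intro u hchain x hpref
  have hout : IOTS.SpellsOutput (IOTSProof.lab T x) (φ x) :=
    (hφ x).2 _ _ (IOTSProof.pth_zero T x) (IOTSProof.infPath T x) (IOTSProof.spellsInput T x)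
  obtain ⟨ρ, hρ, hval, hsurj⟩ := IOTSProof.exists_rho T x (φ x) hout
  have hfm := fun N => IOTSProof.filterMap_eq_map hρ hval hsurj N
  have hg : ∀ k, (IOTSProof.run T (u k)).2 =
      (List.range (u k).length).filterMap (IOTSProof.O T x) := fun k => by
    rw [IOTSProof.run_of_streamPrefix T (hpref k)]
  have hlenmono : StrictMono fun k => (u k).length := by
    apply strictMono_nat_of_lt_succ
    intro k
    have hpre := (hchain k).1
    have hle := hpre.length_le
    rcases lt_or_eq_of_le hle with h | h
    · exact h
    · exact absurd (hpre.eq_of_length h) (hchain k).2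
  have hlen : ∀ k, k ≤ (u k).length := fun k => hlenmono.le_apply
  constructor
  · intro k i hi
    have e : (IOTSProof.run T (u k)).2 =
        (List.range ((List.range (u k).length).filterMap (IOTSProof.O T x)).length).map
          (φ x) := (hg k).trans (hfm (u k).length).1
    rw [List.getElem_of_eq e hi, List.getElem_map, List.getElem_range]
  · intro n
    rcases n with _ | m
    · exact ⟨0, Nat.zero_le _⟩
    · refine ⟨ρ m + 1, ?_⟩
      have hN : ρ m < (u (ρ m + 1)).length := lt_of_lt_of_le (Nat.lt_succ_self _)
        (hlen (ρ m + 1))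
      have := ((hfm (u (ρ m + 1)).length).2 m).1 hN
      simp only
      rw [hg (ρ m + 1)]
      omega
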